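/- For every permutation σ of {1,…,n}, define for 1 ≤ i ≤ n the cell c_i := (d_i(σ), σ(i) − 1 − d_{σ(i)}(σ^{-1})). Then every c_i lies in ℕ×ℕ (i.e. σ(i) − 1 ≥ d_{σ(i)}(σ^{-1})), the n cells c_1, …, c_n are pairwise distinct, and Σ_{i=1}^n c_i = ( Σ_{i=1}^n d_i(σ), n(n−1)/2 − Σ_{j=1}^n d_j(σ^{-1}) ). -/

import Mathlib

attribute [local instance] Classical.propDecidable

/-- The set of (1-based) descents of a permutation `σ` of `{1,…,n}`. -/
noncomputable def descSet {n : ℕ} (σ : Equiv.Perm (Fin n)) : Finset ℕ :=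
  (Finset.range n).filter fun i =>
    ∃ (_ : 1 ≤ i) (h2 : i < n),
      σ ⟨i, h2⟩ < σ ⟨i - 1, Nat.lt_of_le_of_lt (Nat.sub_le i 1) h2⟩

/-- `dstat σ i = d_{i+1}(σ)`: the number of (1-based) descents `k` of `σ` with `k < i+1`. -/
noncomputable def dstat {n : ℕ} (σ : Equiv.Perm (Fin n)) (i : Fin n) : ℕ :=
  ((descSet σ).filter fun k => k < (i : ℕ) + 1).card

/-- The cells of the strictly compact diagram `D_σ^s`:
`c_i = (d_i(σ), σ(i) - 1 - d_{σ(i)}(σ⁻¹))` (1-based); 0-based, `σ(i) - 1` is the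
value `(σ i : ℕ)`. -/
noncomputable def scell {n : ℕ} (σ : Equiv.Perm (Fin n)) (i : Fin n) : ℕ × ℕ :=
  (dstat σ i, (σ i : ℕ) - dstat σ⁻¹ (σ i))

section Aux

variable {n : ℕ} (τ : Equiv.Perm (Fin n))

lemma mem_descSet_iff {k : ℕ} (h1 : 1 ≤ k) (h2 : k < n) :
    k ∈ descSet τ ↔ τ ⟨k, h2⟩ < τ ⟨k - 1, Nat.lt_of_le_of_lt (Nat.sub_le k 1) h2⟩ := by
  simp only [descSet, Finset.mem_filter, Finset.mem_range]
  constructor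
  · rintro ⟨-, -, h2', hlt⟩; exact hlt
  · intro h; exact ⟨h2, h1, h2, h⟩

lemma mem_descSet_bounds {k : ℕ} (hk : k ∈ descSet τ) : 1 ≤ k ∧ k < n := by
  simp only [descSet, Finset.mem_filter, Finset.mem_range] at hk
  obtain ⟨hn, h1, -, -⟩ := hk
  exact ⟨h1, hn⟩

lemma dstat_le (i : Fin n) : dstat τ i ≤ (i : ℕ) := by
  have h : ((descSet τ).filter fun k => k < (i : ℕ) + 1) ⊆ Finset.Icc 1 (i : ℕ) := by
    intro k hk
    rw [Finset.mem_filter] at hk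
    have := mem_descSet_bounds τ hk.1
    rw [Finset.mem_Icc]
    omega
  calc dstat τ i ≤ (Finset.Icc 1 (i : ℕ)).card := Finset.card_le_card h
    _ = (i : ℕ) := by rw [Nat.card_Icc]; omega

lemma dstat_split (a b : Fin n) (h : (a : ℕ) ≤ b) :
    dstat τ b = dstat τ a +
      ((descSet τ).filter fun k => (a : ℕ) < k ∧ k < (b : ℕ) + 1).card := by
  unfold dstat
  have hdisj : Disjoint ((descSet τ).filter fun k => k < (a : ℕ) + 1)
      ((descSet τ).filter fun k => (a : ℕ) < k ∧ k < (b : ℕ) + 1) := by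
    rw [Finset.disjoint_filter]
    intro k _ hk hk'
    omega
  rw [← Finset.card_union_of_disjoint hdisj, ← Finset.filter_or]
  congr 1
  apply Finset.filter_congr
  intro k _
  omega

lemma mid_card_le (a b : Fin n) (h : (a : ℕ) ≤ b) :
    ((descSet τ).filter fun k => (a : ℕ) < k ∧ k < (b : ℕ) + 1).card ≤ (b : ℕ) - a := by
  have hsub : ((descSet τ).filter fun k => (a : ℕ) < k ∧ k < (b : ℕ) + 1)
      ⊆ Finset.Icc ((a : ℕ) + 1) (b : ℕ) := by
    intro k hk
    rw [Finset.mem_filter] at hk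
    rw [Finset.mem_Icc]
    omega
  calc _ ≤ (Finset.Icc ((a : ℕ) + 1) (b : ℕ)).card := Finset.card_le_card hsub
    _ = (b : ℕ) - a := by rw [Nat.card_Icc]; omega

lemma asc_chain (a b : ℕ) (hb : b < n) (hab : a ≤ b)
    (hd : ∀ k, a < k → k ≤ b → k ∉ descSet τ) :
    τ ⟨a, lt_of_le_of_lt hab hb⟩ ≤ τ ⟨b, hb⟩ := by
  induction b with
  | zero => interval_cases a; exact le_refl _
  | succ b ih =>
    rcases Nat.lt_or_ge a (b + 1) with hlt | hge
    · have hab' : a ≤ b := by omega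
      have hb' : b < n := by omega
      have step : τ ⟨b, hb'⟩ ≤ τ ⟨b + 1, hb⟩ := by
        have hnd := hd (b + 1) (by omega) le_rfl
        rw [mem_descSet_iff τ (by omega) hb] at hnd
        push_neg at hnd
        simpa using hnd
      refine le_trans (ih hb' hab' ?_) step
      intro k hk1 hk2
      exact hd k hk1 (by omega)
    · have : a = b + 1 := by omega
      subst this
      exact le_refl _

lemma desc_chain (a b : ℕ) (hb : b < n) (hab : a ≤ b)
    (hd : ∀ k, a < k → k ≤ b → k ∈ descSet τ) :
    τ ⟨b, hb⟩ ≤ τ ⟨a, lt_of_le_of_lt hab hb⟩ := by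
  induction b with
  | zero => interval_cases a; exact le_refl _
  | succ b ih =>
    rcases Nat.lt_or_ge a (b + 1) with hlt | hge
    · have hab' : a ≤ b := by omega
      have hb' : b < n := by omega
      have step : τ ⟨b + 1, hb⟩ < τ ⟨b, hb'⟩ := by
        have hnd := hd (b + 1) (by omega) le_rfl
        rw [mem_descSet_iff τ (by omega) hb] at hnd
        simpa using hnd
      refine le_trans step.le (ih hb' hab' ?_)
      intro k hk1 hk2
      exact hd k hk1 (by omega)
    · have : a = b + 1 := by omega
      subst this
      exact le_refl _

lemma asc_of_dstat_eq (a b : Fin n) (hab : a < b) (h : dstat τ a = dstat τ b) :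
    τ a < τ b := by
  have hsplit := dstat_split τ a b hab.le
  have hcard : ((descSet τ).filter fun k => (a : ℕ) < k ∧ k < (b : ℕ) + 1).card = 0 := by
    omega
  rw [Finset.card_eq_zero] at hcard
  have hle : τ a ≤ τ b := by
    have := asc_chain τ (a : ℕ) (b : ℕ) b.isLt hab.le (by
      intro k hk1 hk2 hmem
      have : k ∈ ((descSet τ).filter fun k => (a : ℕ) < k ∧ k < (b : ℕ) + 1) := by
        rw [Finset.mem_filter]; exact ⟨hmem, hk1, by omega⟩
      rw [hcard] at this
      exact absurd this (Finset.notMem_empty k))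
    simpa using this
  refine lt_of_le_of_ne hle fun hEq => ?_
  exact absurd (τ.injective hEq) (by intro h'; exact absurd h' (by simp [Fin.ext_iff]; omega))

lemma desc_of_sub_eq (a b : Fin n) (hab : a < b)
    (h : (a : ℕ) - dstat τ a = (b : ℕ) - dstat τ b) : τ b < τ a := by
  have ha := dstat_le τ a
  have hb := dstat_le τ b
  have hsplit := dstat_split τ a b hab.le
  have hmid := mid_card_le τ a b hab.le
  have hcard : ((descSet τ).filter fun k => (a : ℕ) < k ∧ k < (b : ℕ) + 1).card
      = (Finset.Icc ((a : ℕ) + 1) (b : ℕ)).card := by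
    rw [Nat.card_Icc]; omega
  have heq : ((descSet τ).filter fun k => (a : ℕ) < k ∧ k < (b : ℕ) + 1)
      = Finset.Icc ((a : ℕ) + 1) (b : ℕ) := by
    apply Finset.eq_of_subset_of_card_le
    · intro k hk
      rw [Finset.mem_filter] at hk
      rw [Finset.mem_Icc]
      omega
    · omega
  have hall : ∀ k, (a : ℕ) < k → k ≤ (b : ℕ) → k ∈ descSet τ := by
    intro k hk1 hk2
    have : k ∈ ((descSet τ).filter fun k => (a : ℕ) < k ∧ k < (b : ℕ) + 1) := by
      rw [heq, Finset.mem_Icc]; omega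
    exact (Finset.mem_filter.mp this).1
  have hle : τ b ≤ τ a := by
    have := desc_chain τ (a : ℕ) (b : ℕ) b.isLt hab.le hall
    simpa using this
  refine lt_of_le_of_ne hle fun hEq => ?_
  exact absurd (τ.injective hEq) (by intro h'; exact absurd h'.symm (by simp [Fin.ext_iff]; omega))

end Aux


/-- The cells `c_i = (d_i(σ), σ(i) - 1 - d_{σ(i)}(σ⁻¹))` genuinely lie in `ℕ × ℕ`
(i.e. `σ(i) - 1 ≥ d_{σ(i)}(σ⁻¹)`), are pairwise distinct, and their sum is
`(Σ_i d_i(σ), n(n-1)/2 - Σ_j d_j(σ⁻¹))`. -/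
theorem stmt17 (n : ℕ) (σ : Equiv.Perm (Fin n)) :
    (∀ i : Fin n, dstat σ⁻¹ (σ i) ≤ (σ i : ℕ)) ∧
    Function.Injective (scell σ) ∧
    (∑ i : Fin n, (scell σ i).1) = (∑ i : Fin n, dstat σ i) ∧
    (∑ i : Fin n, (scell σ i).2) = n * (n - 1) / 2 - ∑ j : Fin n, dstat σ⁻¹ j := by
  have hbound : ∀ i : Fin n, dstat σ⁻¹ (σ i) ≤ (σ i : ℕ) := fun i => dstat_le σ⁻¹ (σ i)
  have key : ∀ i j : Fin n, i < j → scell σ i ≠ scell σ j := by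
    intro i j hlt hij
    have hfst : dstat σ i = dstat σ j := congrArg Prod.fst hij
    have hsnd : (σ i : ℕ) - dstat σ⁻¹ (σ i) = (σ j : ℕ) - dstat σ⁻¹ (σ j) :=
      congrArg Prod.snd hij
    have h1 : σ i < σ j := asc_of_dstat_eq σ i j hlt hfst
    have h2 : σ⁻¹ (σ j) < σ⁻¹ (σ i) := desc_of_sub_eq σ⁻¹ (σ i) (σ j) h1 hsnd
    simp only [Equiv.Perm.inv_def, Equiv.symm_apply_apply] at h2
    exact absurd h2 (not_lt.mpr hlt.le)
  refine ⟨hbound, ?_, rfl, ?_⟩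
  · intro i j hij
    by_contra hne
    rcases lt_or_gt_of_ne hne with hlt | hlt
    · exact key i j hlt hij
    · exact key j i hlt hij.symm
  · have hsplit : (∑ i : Fin n, (scell σ i).2)
        = (∑ i : Fin n, (σ i : ℕ)) - ∑ i : Fin n, dstat σ⁻¹ (σ i) := by
      simp only [scell]
      exact Finset.sum_tsub_distrib Finset.univ fun i _ => hbound i
    rw [hsplit]
    have h1 : (∑ i : Fin n, (σ i : ℕ)) = n * (n - 1) / 2 := by
      rw [Equiv.sum_comp σ (fun j : Fin n => (j : ℕ)), Fin.sum_univ_eq_sum_range (fun k => k) n,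
        Finset.sum_range_id]
    have h2 : (∑ i : Fin n, dstat σ⁻¹ (σ i)) = ∑ j : Fin n, dstat σ⁻¹ j :=
      Equiv.sum_comp σ (dstat σ⁻¹)
    rw [h1, h2]
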